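/- Let K be a commutative ring, let ℓ ≥ 0 and n ≥ 1 be integers, let A be an (ℓ+1)×(ℓ+1) matrix over K, and let c ∈ K. Define the (ℓ+n+1)×(ℓ+n+1) matrix M over K by: M_{i,j} = A_{i,j} for 1 ≤ i, j ≤ ℓ+1; M_{ℓ+i, ℓ+i+1} = 1 for 1 ≤ i ≤ n; M_{ℓ+n+1, j} = A_{ℓ+1, j} for 1 ≤ j ≤ ℓ; M_{ℓ+n+1, ℓ+1} = c; and all other entries equal 0. Then the characteristic polynomials satisfy det(t·I − M) = t^n · det(t·I − A) + S(t), where S(t) = det(B(t)) and B(t) is the (ℓ+1)×(ℓ+1) matrix over K[t] whose rows 1 through ℓ agree with those of t·I − A and whose row ℓ+1 is (−A_{ℓ+1,1}, …, −A_{ℓ+1,ℓ}, −c). -/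

import Mathlib

open Polynomial

/-- The `(ℓ+n+1)×(ℓ+n+1)` matrix built from an `(ℓ+1)×(ℓ+1)` matrix `A` and a scalar
`c` (indices here are 0-based; the statement's 1-based indices are shifted by one):
the upper-left `(ℓ+1)×(ℓ+1)` block is `A`; the entries `M_{ℓ+i-1, ℓ+i}` (0-based) equal
`1` for `1 ≤ i ≤ n`; the last row is `(A_{ℓ,0}, …, A_{ℓ,ℓ-1}, c, 0, …, 0)`; all other
entries vanish. -/
def combMatrix {K : Type*} [CommRing K] (ℓ n : ℕ)
    (A : Matrix (Fin (ℓ + 1)) (Fin (ℓ + 1)) K) (c : K) :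
    Matrix (Fin (ℓ + n + 1)) (Fin (ℓ + n + 1)) K := fun i j =>
  if hi : (i : ℕ) < ℓ + 1 then
    if hj : (j : ℕ) < ℓ + 1 then A ⟨i, hi⟩ ⟨j, hj⟩
    else if (j : ℕ) = (i : ℕ) + 1 then 1 else 0
  else if (i : ℕ) < ℓ + n then
    (if (j : ℕ) = (i : ℕ) + 1 then 1 else 0)
  else
    if hj : (j : ℕ) < ℓ then A ⟨ℓ, Nat.lt_succ_self ℓ⟩ ⟨j, by omega⟩
    else if (j : ℕ) = ℓ then c else 0

/-- The `(ℓ+1)×(ℓ+1)` matrix over `K[t]` whose first `ℓ` rows agree with those of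
`t·I − A` and whose last row is `(−A_{ℓ,0}, …, −A_{ℓ,ℓ-1}, −c)` (0-based indices). -/
noncomputable def recessiveMatrix {K : Type*} [CommRing K] (ℓ : ℕ)
    (A : Matrix (Fin (ℓ + 1)) (Fin (ℓ + 1)) K) (c : K) :
    Matrix (Fin (ℓ + 1)) (Fin (ℓ + 1)) (Polynomial K) := fun i j =>
  if (i : ℕ) < ℓ then Matrix.charmatrix A i j
  else if (j : ℕ) < ℓ then - Polynomial.C (A ⟨ℓ, Nat.lt_succ_self ℓ⟩ j)
  else - Polynomial.C c

/-- Auxiliary matrix `F_m`: the first `ℓ+1` rows look like the characteristic matrix of the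
combined map (with a `-1` in position `(ℓ, ℓ+1)` when `m ≥ 1`), the middle rows are shift
rows `X, -1`, and the last row is `(-A_{ℓ,0}, …, -A_{ℓ,ℓ-1}, -c, 0, …, 0)` (no `X`). -/
noncomputable def auxFm {K : Type*} [CommRing K] (ℓ m : ℕ)
    (A : Matrix (Fin (ℓ+1)) (Fin (ℓ+1)) K) (c : K) :
    Matrix (Fin (ℓ+m+1)) (Fin (ℓ+m+1)) K[X] := fun i j =>
  if (i:ℕ) < ℓ + m then
    if hi : (i:ℕ) < ℓ+1 then
      if hj : (j:ℕ) < ℓ+1 then A.charmatrix ⟨i,hi⟩ ⟨j,hj⟩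
      else if (j:ℕ) = (i:ℕ)+1 then -1 else 0
    else if (j:ℕ) = (i:ℕ) then X else if (j:ℕ) = (i:ℕ)+1 then -1 else 0
  else
    if hj : (j:ℕ) < ℓ then -C (A ⟨ℓ, Nat.lt_succ_self ℓ⟩ ⟨j, by omega⟩)
    else if (j:ℕ) = ℓ then -C c else 0

/-- Auxiliary matrix `H_m`: charmatrix of `A` extended by shift rows. -/
noncomputable def auxHm {K : Type*} [CommRing K] (ℓ m : ℕ)
    (A : Matrix (Fin (ℓ+1)) (Fin (ℓ+1)) K) :
    Matrix (Fin (ℓ+m+1)) (Fin (ℓ+m+1)) K[X] := fun i j =>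
  if hi : (i:ℕ) < ℓ+1 then
    if hj : (j:ℕ) < ℓ+1 then A.charmatrix ⟨i,hi⟩ ⟨j,hj⟩
    else if (j:ℕ) = (i:ℕ)+1 then -1 else 0
  else if (j:ℕ) = (i:ℕ) then X else if (j:ℕ) = (i:ℕ)+1 then -1 else 0

/-- The explicit form of the characteristic matrix of `combMatrix ℓ (k+1) A c`. -/
noncomputable def auxGm {K : Type*} [CommRing K] (ℓ k : ℕ)
    (A : Matrix (Fin (ℓ+1)) (Fin (ℓ+1)) K) (c : K) :
    Matrix (Fin (ℓ+k+1+1)) (Fin (ℓ+k+1+1)) K[X] := fun i j =>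
  if (i:ℕ) < ℓ+k+1 then
    if hi : (i:ℕ) < ℓ+1 then
      if hj : (j:ℕ) < ℓ+1 then A.charmatrix ⟨i,hi⟩ ⟨j,hj⟩
      else if (j:ℕ) = (i:ℕ)+1 then -1 else 0
    else if (j:ℕ) = (i:ℕ) then X else if (j:ℕ) = (i:ℕ)+1 then -1 else 0
  else
    if hj : (j:ℕ) < ℓ then -C (A ⟨ℓ, Nat.lt_succ_self ℓ⟩ ⟨j, by omega⟩)
    else if (j:ℕ) = ℓ then -C c
    else if (j:ℕ) = ℓ+k+1 then X else 0

lemma auxHm_zero {K : Type*} [CommRing K] (ℓ : ℕ)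
    (A : Matrix (Fin (ℓ+1)) (Fin (ℓ+1)) K) : auxHm ℓ 0 A = A.charmatrix := by
  ext i j
  simp [auxHm, i.isLt, j.isLt]

lemma auxFm_zero {K : Type*} [CommRing K] (ℓ : ℕ)
    (A : Matrix (Fin (ℓ+1)) (Fin (ℓ+1)) K) (c : K) :
    auxFm ℓ 0 A c = recessiveMatrix ℓ A c := by
  rw [← Matrix.ext_iff]
  intro i j
  simp only [auxFm, recessiveMatrix, Nat.add_zero]
  by_cases hi : (i:ℕ) < ℓ
  · rw [if_pos hi, if_pos hi, dif_pos (show (i:ℕ) < ℓ+1 by omega), dif_pos j.isLt]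
  · rw [if_neg hi, if_neg hi]
    by_cases hj : (j:ℕ) < ℓ
    · rw [dif_pos hj, if_pos hj]
    · rw [dif_neg hj, if_neg hj, if_pos (show (j:ℕ) = ℓ by omega)]

lemma auxHm_succ_det {K : Type*} [CommRing K] (ℓ m : ℕ)
    (A : Matrix (Fin (ℓ+1)) (Fin (ℓ+1)) K) :
    (auxHm ℓ (m+1) A).det = X * (auxHm ℓ m A).det := by
  rw [Matrix.det_succ_row (auxHm ℓ (m+1) A) (Fin.last _)]
  rw [Finset.sum_eq_single (Fin.last _)]
  · have h1 : auxHm ℓ (m+1) A (Fin.last _) (Fin.last _) = X := by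
      simp only [auxHm, Fin.val_last]
      rw [dif_neg (by omega)]
      simp
    have h2 : ((auxHm ℓ (m+1) A).submatrix (Fin.last _).succAbove (Fin.last _).succAbove)
        = auxHm ℓ m A := by
      ext i j
      simp only [Matrix.submatrix_apply, Fin.succAbove_last, auxHm, Fin.coe_castSucc]
    rw [h1, h2, Fin.val_last, ← two_mul, pow_mul, neg_one_sq, one_pow, one_mul]
  · intro j _ hj
    have hz : auxHm ℓ (m+1) A (Fin.last _) j = 0 := by
      simp only [auxHm, Fin.val_last]
      rw [dif_neg (by omega), if_neg (by intro h; exact hj (Fin.ext h)), if_neg (by omega)]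
    rw [hz, mul_zero, zero_mul]
  · simp

lemma auxFm_succ_det {K : Type*} [CommRing K] (ℓ m : ℕ)
    (A : Matrix (Fin (ℓ+1)) (Fin (ℓ+1)) K) (c : K) :
    (auxFm ℓ (m+1) A c).det = (auxFm ℓ m A c).det := by
  rw [Matrix.det_succ_column (auxFm ℓ (m+1) A c) (Fin.last _)]
  rw [Finset.sum_eq_single (⟨ℓ+m, by omega⟩ : Fin (ℓ+(m+1)).succ)]
  · have h1 : auxFm ℓ (m+1) A c (⟨ℓ+m, by omega⟩ : Fin (ℓ+(m+1)).succ) (Fin.last _) = -1 := by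
      simp only [auxFm, Fin.val_last, Fin.val_mk]
      split_ifs <;> first | rfl | omega
    have h2 : ((auxFm ℓ (m+1) A c).submatrix
          (Fin.succAbove (⟨ℓ+m, by omega⟩ : Fin (ℓ+(m+1)).succ)) (Fin.last _).succAbove)
        = auxFm ℓ m A c := by
      rw [← Matrix.ext_iff]
      intro i j
      simp only [Matrix.submatrix_apply, Fin.succAbove_last, Fin.coe_castSucc]
      rcases lt_or_ge (i:ℕ) (ℓ+m) with hi | hi
      · rw [Fin.succAbove_of_castSucc_lt _ _ (by simp [Fin.lt_def]; omega)]
        simp only [auxFm, Fin.coe_castSucc]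
        rw [if_pos (show ((i:ℕ)) < ℓ+(m+1) by omega), if_pos (show ((i:ℕ)) < ℓ+m from hi)]
      · rw [Fin.succAbove_of_le_castSucc _ _ (by simp [Fin.le_def]; omega)]
        simp only [auxFm, Fin.val_succ, Fin.coe_castSucc]
        rw [if_neg (show ¬((i:ℕ)+1 < ℓ+(m+1)) by omega), if_neg (show ¬((i:ℕ) < ℓ+m) by omega)]
    rw [h1, h2]
    simp only [Fin.val_last, Fin.val_mk]
    have hodd : Odd (ℓ + m + (ℓ + (m+1))) := ⟨ℓ+m, by ring⟩
    rw [hodd.neg_one_pow]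
    rw [neg_one_mul, neg_neg, one_mul]
  · intro i _ hi
    have hine : (i:ℕ) ≠ ℓ + m := fun h => hi (Fin.ext h)
    have hz : auxFm ℓ (m+1) A c i (Fin.last _) = 0 := by
      simp only [auxFm, Fin.val_last]
      split_ifs <;> first | rfl | omega
    rw [hz, mul_zero, zero_mul]
  · simp

lemma charmatrix_comb {K : Type*} [CommRing K] (ℓ k : ℕ)
    (A : Matrix (Fin (ℓ+1)) (Fin (ℓ+1)) K) (c : K) :
    (combMatrix ℓ (k+1) A c).charmatrix = auxGm ℓ k A c := by
  rw [← Matrix.ext_iff]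
  intro i j
  rw [Matrix.charmatrix_apply]
  simp only [Matrix.diagonal_apply, combMatrix, auxGm, Matrix.charmatrix_apply, Fin.ext_iff,
    Fin.val_mk]
  split_ifs <;> simp_all <;> omega

/-- Proposition 3.6(1): `det(t·I − M) = t^n · det(t·I − A) + S(t)`, where
`S(t) = det(B(t))` is independent of `n`. -/
theorem charpoly_combMatrix {K : Type*} [CommRing K] (ℓ n : ℕ) (hn : 1 ≤ n)
    (A : Matrix (Fin (ℓ + 1)) (Fin (ℓ + 1)) K) (c : K) :
    (combMatrix ℓ n A c).charpoly
      = X ^ n * A.charpoly + (recessiveMatrix ℓ A c).det := by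
  obtain ⟨k, rfl⟩ : ∃ k, n = k + 1 := ⟨n - 1, by omega⟩
  clear hn
  have hdetH : ∀ m, (auxHm ℓ m A).det = X ^ m * A.charpoly := by
    intro m
    induction m with
    | zero => rw [auxHm_zero]; simp [Matrix.charpoly]
    | succ p ih => rw [auxHm_succ_det, ih]; ring
  have hdetF : (auxFm ℓ k A c).det = (recessiveMatrix ℓ A c).det := by
    induction k with
    | zero => rw [auxFm_zero]
    | succ p ih => rw [auxFm_succ_det]; exact ih
  rw [Matrix.charpoly, charmatrix_comb]
  show Matrix.det (auxGm ℓ k A c) = X ^ (k+1) * A.charpoly + (recessiveMatrix ℓ A c).det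
  rw [Matrix.det_succ_column (auxGm ℓ k A c) (Fin.last _)]
  rw [← Finset.add_sum_erase _ _ (Finset.mem_univ (Fin.last (ℓ+k+1)))]
  rw [Finset.sum_eq_single_of_mem (⟨ℓ+k, by omega⟩ : Fin (ℓ+k+1).succ)
      (Finset.mem_erase.mpr ⟨Fin.ne_of_val_ne (by simp), Finset.mem_univ _⟩)
      (fun b _ hb => ?_)]
  · -- main computation
    have e1 : auxGm ℓ k A c (Fin.last _) (Fin.last _) = X := by
      simp only [auxGm, Fin.val_last]
      split_ifs <;> first | rfl | omega
    have e2 : auxGm ℓ k A c (⟨ℓ+k, by omega⟩ : Fin (ℓ+k+1).succ) (Fin.last _) = -1 := by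
      simp only [auxGm, Fin.val_last, Fin.val_mk]
      split_ifs <;> first | rfl | omega
    have m1 : ((auxGm ℓ k A c).submatrix (Fin.last _).succAbove (Fin.last _).succAbove)
        = auxHm ℓ k A := by
      rw [← Matrix.ext_iff]
      intro i j
      simp only [Matrix.submatrix_apply, Fin.succAbove_last, auxGm, auxHm, Fin.coe_castSucc]
      rw [if_pos (show (i:ℕ) < ℓ+k+1 by omega)]
    have m2 : ((auxGm ℓ k A c).submatrix
          (Fin.succAbove (⟨ℓ+k, by omega⟩ : Fin (ℓ+k+1).succ)) (Fin.last _).succAbove)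
        = auxFm ℓ k A c := by
      rw [← Matrix.ext_iff]
      intro i j
      simp only [Matrix.submatrix_apply, Fin.succAbove_last, Fin.coe_castSucc]
      rcases lt_or_ge (i:ℕ) (ℓ+k) with hi | hi
      · rw [Fin.succAbove_of_castSucc_lt _ _ (by simp [Fin.lt_def]; omega)]
        simp only [auxGm, auxFm, Fin.coe_castSucc]
        split_ifs <;> first | rfl | omega
      · rw [Fin.succAbove_of_le_castSucc _ _ (by simp [Fin.le_def]; omega)]
        simp only [auxGm, auxFm, Fin.val_succ, Fin.coe_castSucc]
        split_ifs <;> first | rfl | omega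
    rw [e1, e2, m1, m2, hdetH, hdetF]
    simp only [Fin.val_last, Fin.val_mk]
    have hev : ((-1 : K[X])) ^ (ℓ+k+1 + (ℓ+k+1)) = 1 := by
      rw [← two_mul, pow_mul, neg_one_sq, one_pow]
    have hodd : Odd (ℓ + k + (ℓ+k+1)) := ⟨ℓ+k, by ring⟩
    rw [hev, hodd.neg_one_pow]
    ring
  · -- other entries in the column vanish
    have hb1 : (b:ℕ) ≠ ℓ+k := fun h => hb (Fin.ext h)
    have hb2 : (b:ℕ) ≠ ℓ+k+1 := fun h =>
      (Finset.ne_of_mem_erase ‹b ∈ _›) (Fin.ext h)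
    have hz : auxGm ℓ k A c b (Fin.last _) = 0 := by
      simp only [auxGm, Fin.val_last]
      split_ifs <;> first | rfl | omega
    rw [hz, mul_zero, zero_mul]
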